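/- Let Y_1, …, Y_m be independent, identically distributed random variables on a probability space such that ℙ(Y_i = j) = (1/2)^j for every integer j ≥ 1 (so each Y_i is geometric with success probability 1/2 counting the number of trials up to and including the first success, and E Y_i = 2). Then for every real ε > 0, ℙ( Σ_{i=1}^{m} Y_i − 2m > ε ) ≤ exp( − ⌊ε⌋² / (2 (2m + ⌊ε⌋)) ). -/

import Mathlib

set_option maxHeartbeats 1000000

open MeasureTheory ProbabilityTheory

section Auxiliary

open Real

private lemma key_entropy_aux {u : ℝ} (h0 : 0 ≤ u) (h1 : u < 1) :
    u ^ 2 ≤ (1 + u) * Real.log (1 + u) + (1 - u) * Real.log (1 - u) := by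
  have habs : |u| < 1 := abs_lt.mpr ⟨by linarith, h1⟩
  have habs2 : |u ^ 2| < 1 := by
    rw [abs_of_nonneg (sq_nonneg u)]; nlinarith
  have hG := (Real.hasSum_log_sub_log_of_abs_lt_one habs).mul_left u
  have hL := Real.hasSum_pow_div_log_of_abs_lt_one habs2
  have hF := hG.sub hL
  have hval : u * (Real.log (1 + u) - Real.log (1 - u)) - -Real.log (1 - u ^ 2)
      = (1 + u) * Real.log (1 + u) + (1 - u) * Real.log (1 - u) := by
    have he : (1 : ℝ) - u ^ 2 = (1 + u) * (1 - u) := by ring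
    rw [he, Real.log_mul (by linarith : (0:ℝ) < 1 + u).ne' (by linarith : (0:ℝ) < 1 - u).ne']
    ring
  rw [hval] at hF
  have hterm0 : u * (2 * (1 / (2 * (0 : ℕ) + 1)) * u ^ (2 * 0 + 1))
      - (u ^ 2) ^ ((0 : ℕ) + 1) / ((0 : ℕ) + 1) = u ^ 2 := by
    norm_num; ring
  have hnn : ∀ k : ℕ, k ≠ 0 →
      0 ≤ u * (2 * (1 / (2 * (k : ℝ) + 1)) * u ^ (2 * k + 1))
        - (u ^ 2) ^ (k + 1) / ((k : ℝ) + 1) := by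
    intro k _
    have hw : (0 : ℝ) ≤ u ^ (2 * k + 1) := pow_nonneg h0 _
    have h2 : (u ^ 2) ^ (k + 1) = u ^ (2 * k + 1) * u := by
      rw [← pow_mul, ← pow_succ]; ring_nf
    have hpos1 : (0 : ℝ) < 2 * (k : ℝ) + 1 := by positivity
    have hpos2 : (0 : ℝ) < (k : ℝ) + 1 := by positivity
    have hfrac : (1 : ℝ) ≤ 2 * (1 / (2 * (k : ℝ) + 1)) * ((k : ℝ) + 1) := by
      rw [mul_one_div, div_mul_eq_mul_div, le_div_iff₀ hpos1]; linarith
    rw [h2, sub_nonneg, div_le_iff₀ hpos2]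
    calc u ^ (2 * k + 1) * u = (u * u ^ (2 * k + 1)) * 1 := by ring
      _ ≤ (u * u ^ (2 * k + 1)) * (2 * (1 / (2 * (k : ℝ) + 1)) * ((k : ℝ) + 1)) :=
          mul_le_mul_of_nonneg_left hfrac (mul_nonneg h0 hw)
      _ = u * (2 * (1 / (2 * (k : ℝ) + 1)) * u ^ (2 * k + 1)) * ((k : ℝ) + 1) := by ring
  have := le_hasSum hF 0 hnn
  calc u ^ 2 = _ := hterm0.symm
    _ ≤ _ := this

private lemma final_ineq_aux (mn : ℕ) (M K : ℝ) (hmn : (mn : ℝ) = M) (hM : 1 ≤ M) (hK : 1 ≤ K) :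
    Real.exp (-(Real.log (2 * (M + K + 1) / (2 * M + K + 1)) * (2 * M + K + 1)))
        * ((M + K + 1) / M) ^ mn
      ≤ Real.exp (-K ^ 2 / (2 * (2 * M + K))) := by
  set D : ℝ := 2 * M + K + 1 with hD
  have hDpos : 0 < D := by rw [hD]; linarith
  set u : ℝ := (K + 1) / D with hu
  have hu0 : 0 < u := by positivity
  have hu1 : u < 1 := by
    rw [hu, div_lt_one hDpos, hD]; linarith
  have h1u : (0:ℝ) < 1 + u := by linarith
  have h2u : (0:ℝ) < 1 - u := by linarith
  set L1 : ℝ := Real.log (1 + u) with hL1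
  set L2 : ℝ := Real.log (1 - u) with hL2
  have hrel : D * (1 - u) = 2 * M := by
    rw [hu]; field_simp; ring
  have hr : 2 * (M + K + 1) / D = 1 + u := by
    rw [hu]; field_simp [hD]; ring
  have hMpos : 0 < M := by linarith
  have hratio : (M + K + 1) / M = (1 + u) / (1 - u) := by
    rw [div_eq_div_iff hMpos.ne' h2u.ne']
    nlinarith [hrel]
  have hlhs : Real.exp (-(Real.log (2 * (M + K + 1) / D) * D)) * ((M + K + 1) / M) ^ mn
      = Real.exp (-(L1 * D) + M * (L1 - L2)) := by
    rw [hr, hratio, ← Real.exp_log (show (0:ℝ) < (1 + u) / (1 - u) by positivity),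
      ← Real.exp_nat_mul, ← Real.exp_add, hmn, Real.log_div h1u.ne' h2u.ne']
  rw [hlhs, Real.exp_le_exp]
  have hs1 : -(L1 * D) + M * (L1 - L2) = -(D / 2) * ((1 + u) * L1 + (1 - u) * L2) := by
    linear_combination (L2 - L1) / 2 * hrel
  have hkey := key_entropy_aux hu0.le hu1
  have hs2 : -(D / 2) * ((1 + u) * L1 + (1 - u) * L2) ≤ -(D / 2) * u ^ 2 := by
    have := mul_le_mul_of_nonneg_left hkey (show (0:ℝ) ≤ D / 2 by positivity)
    linarith
  have hs3 : (D / 2) * u ^ 2 = (K + 1) ^ 2 / (2 * D) := by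
    rw [hu]; field_simp
  have hs4 : K ^ 2 / (2 * (2 * M + K)) ≤ (K + 1) ^ 2 / (2 * D) := by
    rw [div_le_div_iff₀ (by linarith) (by linarith)]
    nlinarith
  calc -(L1 * D) + M * (L1 - L2) = -(D / 2) * ((1 + u) * L1 + (1 - u) * L2) := hs1
    _ ≤ -(D / 2) * u ^ 2 := hs2
    _ = -((K + 1) ^ 2 / (2 * D)) := by rw [← hs3]; ring
    _ ≤ -(K ^ 2 / (2 * (2 * M + K))) := neg_le_neg hs4
    _ = -K ^ 2 / (2 * (2 * M + K)) := by ring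

private lemma geom_mgf_aux {Ω : Type*} [MeasurableSpace Ω] (P : Measure Ω)
    [IsProbabilityMeasure P]
    (Z : Ω → ℕ) (hZ : Measurable Z)
    (hd : ∀ j : ℕ, 1 ≤ j → P {ω | Z ω = j} = ENNReal.ofReal ((1 / 2 : ℝ) ^ j))
    (t : ℝ) (ht : Real.exp t < 2) :
    Integrable (fun ω => Real.exp (t * (Z ω : ℝ))) P ∧
      ∫ ω, Real.exp (t * (Z ω : ℝ)) ∂P = Real.exp t / (2 - Real.exp t) := by
  set μi : Measure ℕ := P.map Z with hμi
  haveI : IsProbabilityMeasure μi := Measure.isProbabilityMeasure_map hZ.aemeasurable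
  set q : ℝ := Real.exp t / 2 with hq
  have hq0 : 0 ≤ q := by positivity
  have hq1 : q < 1 := by rw [hq]; linarith
  have hsing : ∀ j : ℕ, μi {j} = P {ω | Z ω = j} := by
    intro j
    rw [hμi, Measure.map_apply hZ (measurableSet_singleton j)]
    congr 1
  have hsummable : Summable (fun j : ℕ => ((1:ℝ)/2) ^ (j+1)) := by
    have := (summable_geometric_of_lt_one (by norm_num : (0:ℝ) ≤ 1/2) (by norm_num)).mul_right
      ((1:ℝ)/2)
    simpa [pow_succ] using this
  have hgeo1 : (∑' j : ℕ, ((1:ℝ)/2) ^ (j+1)) = 1 := by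
    have h1 : (∑' j : ℕ, ((1:ℝ)/2) ^ (j+1)) = (∑' j : ℕ, ((1:ℝ)/2) ^ j) * (1/2) := by
      rw [← tsum_mul_right]
      exact tsum_congr fun j => pow_succ _ _
    rw [h1, tsum_geometric_of_lt_one (by norm_num) (by norm_num)]
    norm_num
  have hμ0 : μi {0} = 0 := by
    have htot : (∑' j : ℕ, μi {j}) = 1 := by
      have := MeasureTheory.Measure.tsum_indicator_apply_singleton μi Set.univ MeasurableSet.univ
      simpa using this
    have hsplit : (∑' j : ℕ, μi {j}) = μi {0} + ∑' j : ℕ, μi {j + 1} :=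
      tsum_eq_zero_add' ENNReal.summable
    have htail : (∑' j : ℕ, μi {j + 1}) = 1 := by
      have : (∑' j : ℕ, μi {j + 1}) = ∑' j : ℕ, ENNReal.ofReal (((1:ℝ)/2) ^ (j+1)) := by
        congr 1; funext j; rw [hsing, hd _ (by omega)]
      rw [this, ← ENNReal.ofReal_tsum_of_nonneg (fun j => by positivity) hsummable, hgeo1]
      simp
    rw [hsplit, htail] at htot
    have h01 : (1 : ENNReal) + μi {0} = 1 + 0 := by
      rw [add_zero, add_comm]
      exact htot
    exact (ENNReal.add_right_inj ENNReal.one_ne_top).mp h01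
  set g : ℕ → ℝ := fun j => Real.exp (t * j) with hg
  have hgnn : ∀ j, 0 ≤ g j := fun j => (Real.exp_pos _).le
  have hqsummable : Summable (fun j : ℕ => q ^ (j+1)) := by
    have := (summable_geometric_of_lt_one hq0 hq1).mul_right q
    simpa [pow_succ] using this
  have hlint : (∫⁻ j : ℕ, ENNReal.ofReal (g j) ∂μi) = ENNReal.ofReal (∑' j : ℕ, q ^ (j+1)) := by
    rw [lintegral_countable']
    rw [tsum_eq_zero_add' ENNReal.summable]
    rw [hμ0, mul_zero, zero_add]
    rw [ENNReal.ofReal_tsum_of_nonneg (fun j => by positivity) hqsummable]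
    congr 1; funext j
    rw [hsing, hd _ (by omega), ← ENNReal.ofReal_mul (hgnn _)]
    congr 1
    have hgj : g (j+1) = (Real.exp t) ^ (j+1) := by
      simp only [hg]
      rw [mul_comm]
      exact Real.exp_nat_mul t (j + 1)
    rw [hgj, hq, div_pow]
    rw [one_pow, mul_one_div, div_pow]
  have hgmeas : Measurable g := measurable_from_top
  have hint_g : Integrable g μi := by
    refine ⟨hgmeas.aestronglyMeasurable, ?_⟩
    rw [hasFiniteIntegral_iff_ofReal (.of_forall hgnn), hlint]
    exact ENNReal.ofReal_lt_top
  have hval_g : ∫ j : ℕ, g j ∂μi = Real.exp t / (2 - Real.exp t) := by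
    rw [integral_eq_lintegral_of_nonneg_ae (.of_forall hgnn) hgmeas.aestronglyMeasurable, hlint,
      ENNReal.toReal_ofReal (tsum_nonneg fun j => by positivity)]
    have h1 : (∑' j : ℕ, q ^ (j+1)) = (1 - q)⁻¹ * q := by
      have h2 : (∑' j : ℕ, q ^ (j+1)) = (∑' j : ℕ, q ^ j) * q := by
        rw [← tsum_mul_right]; exact tsum_congr fun j => pow_succ _ _
      rw [h2, tsum_geometric_of_lt_one hq0 hq1]
    rw [h1, hq]
    have h2 : (2 : ℝ) - Real.exp t > 0 := by linarith
    field_simp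
  constructor
  · have := (integrable_map_measure hgmeas.aestronglyMeasurable hZ.aemeasurable).mp
      (by rwa [← hμi])
    exact this
  · rw [← hval_g, ← integral_map hZ.aemeasurable hgmeas.aestronglyMeasurable]

end Auxiliary

/-- Lemma `geometric_bound`: Hoeffding-type tail bound for a sum of `m` i.i.d. geometric
random variables with success probability `1/2` (counting trials, so `ℙ(Y = j) = 2⁻ʲ`
for `j ≥ 1` and `E Y = 2`). -/
theorem stmt_1 {Ω : Type*} [MeasurableSpace Ω] (P : Measure Ω) [IsProbabilityMeasure P]
    (m : ℕ) (Y : Fin m → Ω → ℕ)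
    (hmeas : ∀ i, Measurable (Y i))
    (hindep : iIndepFun Y P)
    (hdist : ∀ i, ∀ j : ℕ, 1 ≤ j →
      P {ω | Y i ω = j} = ENNReal.ofReal ((1 / 2 : ℝ) ^ j)) :
    ∀ ε : ℝ, 0 < ε →
      P {ω | (∑ i, (Y i ω : ℝ)) - 2 * m > ε}
        ≤ ENNReal.ofReal
            (Real.exp (-(⌊ε⌋ : ℝ) ^ 2 / (2 * (2 * (m : ℝ) + (⌊ε⌋ : ℝ))))) := by
  intro ε hε
  have hfl0 : (0:ℤ) ≤ ⌊ε⌋ := Int.floor_nonneg.mpr hε.le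
  set k : ℕ := ⌊ε⌋.toNat with hk
  have hkr : ((⌊ε⌋ : ℤ) : ℝ) = (k : ℝ) := by
    rw [hk]; exact_mod_cast (Int.toNat_of_nonneg hfl0).symm
  rcases Nat.eq_zero_or_pos m with hm | hm
  · subst hm
    have hset : {ω : Ω | (∑ i, (Y i ω : ℝ)) - 2 * ((0:ℕ) : ℝ) > ε} = ∅ := by
      ext ω
      simp only [Finset.univ_eq_empty, Finset.sum_empty, Nat.cast_zero, mul_zero, sub_zero,
        Set.mem_setOf_eq, Set.mem_empty_iff_false, iff_false, not_lt]
      linarith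
    rw [hset, measure_empty]
    exact zero_le
  rcases Nat.eq_zero_or_pos k with hk0 | hk1
  · have hzero : ((⌊ε⌋ : ℤ) : ℝ) = 0 := by rw [hkr, hk0]; simp
    rw [hzero]
    have : Real.exp (-(0:ℝ) ^ 2 / (2 * (2 * (m:ℝ) + 0))) = 1 := by norm_num
    rw [this, ENNReal.ofReal_one]
    exact prob_le_one
  -- main case
  set M : ℝ := (m : ℝ) with hMdef
  set K : ℝ := (k : ℝ) with hKdef
  have hM1 : 1 ≤ M := by rw [hMdef]; exact_mod_cast hm
  have hK1 : 1 ≤ K := by rw [hKdef]; exact_mod_cast hk1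
  set D : ℝ := 2 * M + K + 1 with hDdef
  have hDpos : 0 < D := by rw [hDdef]; linarith
  set r : ℝ := 2 * (M + K + 1) / D with hrdef
  have hrpos : 0 < r := by positivity
  have hr1 : 1 ≤ r := by
    rw [hrdef, le_div_iff₀ hDpos, hDdef]; linarith
  have hr2 : r < 2 := by
    rw [hrdef, div_lt_iff₀ hDpos, hDdef]; linarith
  set t : ℝ := Real.log r with htdef
  have ht0 : 0 ≤ t := Real.log_nonneg hr1
  have hexpt : Real.exp t = r := Real.exp_log hrpos
  have hexpt2 : Real.exp t < 2 := by rw [hexpt]; exact hr2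
  -- the real-valued random variables
  set Xi : Fin m → Ω → ℝ := fun i ω => ((Y i ω : ℕ) : ℝ) with hXidef
  have hXimeas : ∀ i, Measurable (Xi i) := fun i => measurable_from_top.comp (hmeas i)
  have hindep' : iIndepFun Xi P :=
    hindep.comp (fun _ => ((↑) : ℕ → ℝ)) (fun _ => measurable_from_top)
  have hgeom : ∀ i : Fin m,
      Integrable (fun ω => Real.exp (t * (Y i ω : ℝ))) P ∧
        ∫ ω, Real.exp (t * (Y i ω : ℝ)) ∂P = Real.exp t / (2 - Real.exp t) :=
    fun i => geom_mgf_aux P (Y i) (hmeas i) (hdist i) t hexpt2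
  set X : Ω → ℝ := ∑ i, Xi i with hXdef
  have hint : Integrable (fun ω => Real.exp (t * X ω)) P :=
    hindep'.integrable_exp_mul_sum hXimeas (fun i _ => (hgeom i).1)
  have hmgf : mgf X P t = ((M + K + 1) / M) ^ m := by
    rw [hXdef, hindep'.mgf_sum hXimeas Finset.univ]
    have hone : ∀ i : Fin m, mgf (Xi i) P t = (M + K + 1) / M := by
      intro i
      have h1 : mgf (Xi i) P t = Real.exp t / (2 - Real.exp t) := (hgeom i).2
      have hMpos : 0 < M := by linarith
      have h2rpos : 0 < 2 - r := by linarith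
      rw [h1, hexpt, div_eq_div_iff h2rpos.ne' hMpos.ne', hrdef, hDdef]
      field_simp
      ring
    rw [Finset.prod_congr rfl (fun i _ => hone i), Finset.prod_const, Finset.card_univ,
      Fintype.card_fin]
  -- inclusion of events
  have hsub : {ω : Ω | (∑ i, (Y i ω : ℝ)) - 2 * M > ε} ⊆ {ω : Ω | D ≤ X ω} := by
    intro ω hω
    simp only [Set.mem_setOf_eq] at hω ⊢
    have hXω : X ω = ∑ i, (Y i ω : ℝ) := by
      rw [hXdef]; simp [Xi, Finset.sum_apply]
    have hεK : K ≤ ε := by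
      rw [← hkr]; exact Int.floor_le ε
    have h2 : 2 * m + k < ∑ i, Y i ω := by
      have hc : ((2 * m + k : ℕ) : ℝ) < ∑ i, (Y i ω : ℝ) := by
        push_cast
        linarith [hω, hεK, hMdef, hKdef]
      rw [← Nat.cast_sum] at hc
      exact_mod_cast hc
    have hc2 : ((2 * m + k + 1 : ℕ) : ℝ) ≤ ((∑ i, Y i ω : ℕ) : ℝ) := by exact_mod_cast h2
    push_cast at hc2
    rw [hXω, hDdef, hMdef, hKdef]
    linarith
  -- Chernoff bound
  have hcher := measure_ge_le_exp_mul_mgf (μ := P) (X := X) D ht0 hint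
  calc P {ω | (∑ i, (Y i ω : ℝ)) - 2 * M > ε}
      ≤ P {ω | D ≤ X ω} := measure_mono hsub
    _ = ENNReal.ofReal ((P {ω | D ≤ X ω}).toReal) :=
        (ENNReal.ofReal_toReal (measure_ne_top _ _)).symm
    _ ≤ ENNReal.ofReal (Real.exp (-t * D) * mgf X P t) := ENNReal.ofReal_le_ofReal hcher
    _ ≤ ENNReal.ofReal (Real.exp (-K ^ 2 / (2 * (2 * M + K)))) := by
        refine ENNReal.ofReal_le_ofReal ?_
        rw [hmgf, neg_mul, htdef, hrdef, hDdef]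
        exact final_ineq_aux m M K rfl hM1 hK1
    _ = ENNReal.ofReal (Real.exp (-((⌊ε⌋ : ℤ) : ℝ) ^ 2 / (2 * (2 * M + ((⌊ε⌋ : ℤ) : ℝ))))) := by
        rw [hkr, hKdef]
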